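/- Let P be the set of non-zero vectors of 𝔽_2^n and let B_k (for 3 ≤ k ≤ 2^n − 2, k ≤ n+1) be the family of k-element subsets of P summing to zero. Let e_1, …, e_n be the canonical basis of 𝔽_2^n and put 𝔠_k = {e_1, …, e_{k−1}, e_1 + e_2 + ⋯ + e_{k−1}}. Then a block 𝔟 ∈ B_k is irreducible (i.e., not reducible) if and only if 𝔟 lies in the orbit of 𝔠_k under the natural action of GL_n(𝔽_2), i.e., there exists an invertible linear map g of 𝔽_2^n with g(𝔠_k) = 𝔟. -/

import Mathlib

open Finset

section CK
variable {n m : ℕ} (hmn : m ≤ n)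

/-- evaluation of a partial sum of basis vectors -/
lemma eval_sum (I : Finset (Fin m)) (j : Fin m) :
    (∑ i ∈ I, (Pi.single (Fin.castLE hmn i) 1 : Fin n → ZMod 2)) (Fin.castLE hmn j)
      = if j ∈ I then 1 else 0 := by
  classical
  rw [Finset.sum_apply]
  have : ∀ i ∈ I, (Pi.single (Fin.castLE hmn i) 1 : Fin n → ZMod 2) (Fin.castLE hmn j)
      = if i = j then 1 else 0 := by
    intro i _
    rw [Pi.single_apply]
    congr 1
    simp [Fin.castLE_inj, eq_comm]
  rw [Finset.sum_congr rfl this, Finset.sum_ite_eq' I j (fun _ => (1 : ZMod 2))]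

lemma E_inj : Function.Injective
    (fun i : Fin m => (Pi.single (Fin.castLE hmn i) 1 : Fin n → ZMod 2)) := by
  intro i j h
  by_contra hne
  have := congrFun h (Fin.castLE hmn j)
  simp [Pi.single_apply, Fin.castLE_inj, Ne.symm hne] at this

lemma T_ne_E (hm2 : 2 ≤ m) (i : Fin m) :
    (∑ j : Fin m, (Pi.single (Fin.castLE hmn j) 1 : Fin n → ZMod 2))
      ≠ Pi.single (Fin.castLE hmn i) 1 := by
  classical
  obtain ⟨j, hj⟩ : ∃ j : Fin m, j ≠ i := by
    refine ⟨if i = ⟨0, by omega⟩ then ⟨1, by omega⟩ else ⟨0, by omega⟩, ?_⟩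
    split <;> simp_all [Fin.ext_iff] <;> omega
  intro h
  have := congrFun h (Fin.castLE hmn j)
  rw [show (∑ j : Fin m, (Pi.single (Fin.castLE hmn j) 1 : Fin n → ZMod 2))
      = ∑ j ∈ univ, (Pi.single (Fin.castLE hmn j) 1 : Fin n → ZMod 2) from rfl] at this
  rw [eval_sum hmn univ j, if_pos (mem_univ j), Pi.single_apply] at this
  rw [if_neg (by simp [Fin.castLE_inj, hj])] at this
  exact one_ne_zero this

/-- Any zero-sum subset of the canonical block is empty or everything. -/
lemma ck_subset (hm2 : 2 ≤ m) (u : Finset (Fin n → ZMod 2))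
    (hu : u ⊆ (Finset.univ.image (fun i : Fin m =>
        (Pi.single (Fin.castLE hmn i) 1 : Fin n → ZMod 2))) ∪
      {∑ i : Fin m, (Pi.single (Fin.castLE hmn i) 1 : Fin n → ZMod 2)})
    (hsum : (∑ x ∈ u, x) = 0) :
    u = ∅ ∨ u = (Finset.univ.image (fun i : Fin m =>
        (Pi.single (Fin.castLE hmn i) 1 : Fin n → ZMod 2))) ∪
      {∑ i : Fin m, (Pi.single (Fin.castLE hmn i) 1 : Fin n → ZMod 2)} := by
  classical
  set E : Fin m → (Fin n → ZMod 2) :=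
    fun i => (Pi.single (Fin.castLE hmn i) 1 : Fin n → ZMod 2) with hE
  set T : Fin n → ZMod 2 := ∑ i : Fin m, E i with hT
  set A : Finset (Fin n → ZMod 2) := Finset.univ.image E with hA
  by_cases hTu : T ∈ u
  · right
    -- u = A ∪ {T}
    have hu1 : u.erase T ⊆ A := by
      intro x hx
      have hx' := hu (erase_subset _ _ hx)
      rcases mem_union.1 hx' with h | h
      · exact h
      · exact absurd (mem_singleton.1 h) (ne_of_mem_erase hx)
    set I : Finset (Fin m) := univ.filter (fun i => E i ∈ u.erase T) with hI
    have himg : Finset.image E I = u.erase T := by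
      ext x
      simp only [mem_image, hI, mem_filter, mem_univ, true_and]
      constructor
      · rintro ⟨i, hi, rfl⟩; exact hi
      · intro hx
        obtain ⟨i, _, rfl⟩ := mem_image.1 (hu1 hx)
        exact ⟨i, hx, rfl⟩
    have hsum' : (∑ x ∈ u, x) = T + ∑ i ∈ I, E i := by
      rw [← Finset.insert_erase hTu, Finset.sum_insert (notMem_erase _ _), ← himg,
        Finset.sum_image (fun a _ b _ h => E_inj hmn h)]
    have hIuniv : I = univ := by
      by_contra hne
      obtain ⟨j, hj⟩ : ∃ j, j ∉ I := by
        by_contra hall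
        push_neg at hall
        exact hne (eq_univ_iff_forall.2 hall)
      have := congrFun (hsum' ▸ hsum) (Fin.castLE hmn j)
      rw [Pi.add_apply, hT] at this
      rw [show (∑ i : Fin m, E i) = ∑ i ∈ univ, E i from rfl] at this
      rw [eval_sum hmn univ j, eval_sum hmn I j, if_pos (mem_univ j), if_neg hj] at this
      simp at this
    have : u.erase T = A := by
      rw [← himg, hIuniv, hA]
    rw [← Finset.insert_erase hTu, this]
    rw [union_comm]
    rfl
  · left
    have hu1 : u ⊆ A := by
      intro x hx
      rcases mem_union.1 (hu hx) with h | h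
      · exact h
      · exact absurd (mem_singleton.1 h) (by rintro rfl; exact hTu hx)
    set I : Finset (Fin m) := univ.filter (fun i => E i ∈ u) with hI
    have himg : Finset.image E I = u := by
      ext x
      simp only [mem_image, hI, mem_filter, mem_univ, true_and]
      constructor
      · rintro ⟨i, hi, rfl⟩; exact hi
      · intro hx
        obtain ⟨i, _, rfl⟩ := mem_image.1 (hu1 hx)
        exact ⟨i, hx, rfl⟩
    have hsum' : (∑ x ∈ u, x) = ∑ i ∈ I, E i := by
      rw [← himg, Finset.sum_image (fun a _ b _ h => E_inj hmn h)]
    have hIempty : I = ∅ := by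
      by_contra hne
      obtain ⟨j, hj⟩ := nonempty_iff_ne_empty.2 hne
      have := congrFun (hsum' ▸ hsum) (Fin.castLE hmn j)
      rw [eval_sum hmn I j, if_pos hj] at this
      exact one_ne_zero this
    rw [← himg, hIempty, image_empty]

end CK

lemma exists_equiv_extend {α : Type*} [Fintype α] [DecidableEq α] {m n : ℕ}
    (hcard : Fintype.card α = n) (f : Fin m → α) (hf : Function.Injective f)
    (hmn : m ≤ n) :
    ∃ ψ : Fin n ≃ α, ∀ i : Fin m, ψ (Fin.castLE hmn i) = f i := by
  classical
  have hR : Fintype.card (Set.range f) = m := by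
    rw [Set.card_range_of_injective hf, Fintype.card_fin]
  have hRc : Fintype.card (↥(Set.range f)ᶜ) = n - m := by
    have := Fintype.card_compl_set (Set.range f)
    rw [this, hR, hcard]
  have hadd : m + (n - m) = n := by omega
  let e1 : Fin m ≃ Set.range f := Equiv.ofInjective f hf
  let e2 : Fin (n - m) ≃ ↥(Set.range f)ᶜ := (Fintype.equivFinOfCardEq hRc).symm
  let ψ : Fin n ≃ α :=
    (finCongr hadd.symm).trans <| finSumFinEquiv.symm.trans <|
      (e1.sumCongr e2).trans (Equiv.sumCompl (· ∈ Set.range f))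
  refine ⟨ψ, fun i => ?_⟩
  have h1 : (finCongr hadd.symm) (Fin.castLE hmn i) = Fin.castAdd (n - m) i := by
    ext; simp [Fin.castLE]
  simp only [ψ, Equiv.trans_apply, h1, finSumFinEquiv_symm_apply_castAdd]
  simp [e1, Equiv.sumCompl]

lemma zmod2_cases : ∀ a : ZMod 2, a = 0 ∨ a = 1 := by decide

lemma add_self_zero {n : ℕ} (x : Fin n → ZMod 2) : x + x = 0 := by
  funext j
  simp only [Pi.add_apply, Pi.zero_apply]
  rcases zmod2_cases (x j) with h | h <;> rw [h] <;> decide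

/-- Let P be the set of non-zero vectors of 𝔽₂ⁿ and, for
3 ≤ k ≤ 2ⁿ − 2 with k ≤ n + 1, let 𝔟 be a zero-sum k-subset of P (a block of
B_k). With e₁,…,e_n the canonical basis and
𝔠_k = {e₁,…,e_{k−1}, e₁ + ⋯ + e_{k−1}}, the block 𝔟 is irreducible (it has no
nonempty proper zero-sum subset) iff 𝔟 = g(𝔠_k) for some g ∈ GL_n(𝔽₂). -/
theorem stmt_11 (n k : ℕ) (hk3 : 3 ≤ k) (hkn : k ≤ n + 1) (hk2n : k ≤ 2 ^ n - 2)
    (b : Finset (Fin n → ZMod 2))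
    (hb0 : ∀ x ∈ b, x ≠ 0) (hbcard : b.card = k) (hbsum : (∑ x ∈ b, x) = 0) :
    (¬ ∃ s : Finset (Fin n → ZMod 2), s ⊂ b ∧ s.Nonempty ∧ (∑ x ∈ s, x) = 0) ↔
    ∃ g : (Fin n → ZMod 2) ≃ₗ[ZMod 2] (Fin n → ZMod 2),
      Finset.image g
        ((Finset.univ.image (fun i : Fin (k - 1) =>
            (Pi.single (Fin.castLE (by omega) i) 1 : Fin n → ZMod 2))) ∪
          {∑ i : Fin (k - 1),
            (Pi.single (Fin.castLE (by omega) i) 1 : Fin n → ZMod 2)}) = b := by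
  classical
  have hmn : k - 1 ≤ n := by omega
  have hm2 : 2 ≤ k - 1 := by omega
  constructor
  · -- irreducible → in the orbit
    intro hirr
    obtain ⟨v, hv⟩ : b.Nonempty := by rw [← Finset.card_pos, hbcard]; omega
    set s : Finset (Fin n → ZMod 2) := b.erase v with hsdef
    have hscard : s.card = k - 1 := by rw [hsdef, card_erase_of_mem hv, hbcard]
    have hsb : s ⊆ b := erase_subset _ _
    have hvs : v ∉ s := notMem_erase _ _
    have hbis : b = insert v s := (insert_erase hv).symm
    have hsumv : ∑ x ∈ s, x = v := by
      have h0 : v + ∑ x ∈ s, x = 0 := by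
        have h0' : ∑ x ∈ insert v s, x = 0 := by rw [← hbis]; exact hbsum
        rwa [Finset.sum_insert hvs] at h0'
      calc ∑ x ∈ s, x = (v + v) + ∑ x ∈ s, x := by rw [add_self_zero, zero_add]
        _ = v + (v + ∑ x ∈ s, x) := by rw [add_assoc]
        _ = v := by rw [h0, add_zero]
    -- linear independence of s
    have hli : LinearIndependent (ZMod 2) ((↑) : ↥(↑s : Set (Fin n → ZMod 2)) → (Fin n → ZMod 2)) := by
      by_contra hnli
      rw [Fintype.not_linearIndependent_iff] at hnli
      obtain ⟨c, hc0, x0, hx0⟩ := hnli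
      set u : Finset (Fin n → ZMod 2) := Finset.image (fun x : ↥(↑s : Set (Fin n → ZMod 2)) => (x : Fin n → ZMod 2))
        (univ.filter (fun x => c x ≠ 0)) with hu
      have husum : ∑ y ∈ u, y = 0 := by
        rw [hu, Finset.sum_image (fun a _ b _ h => Subtype.coe_injective h), ← hc0,
          Finset.sum_filter]
        refine Finset.sum_congr rfl (fun x _ => ?_)
        by_cases h : c x ≠ 0
        · rw [if_pos h]
          rcases zmod2_cases (c x) with h1 | h1
          · exact absurd h1 h
          · rw [h1, one_smul]
        · rw [if_neg h]
          push_neg at h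
          rw [h, zero_smul]
      have husb : u ⊆ s := by
        intro y hy
        obtain ⟨x, _, rfl⟩ := mem_image.1 hy
        exact x.2
      have hune : u.Nonempty := ⟨↑x0, mem_image.2 ⟨x0, mem_filter.2 ⟨mem_univ _, hx0⟩, rfl⟩⟩
      refine hirr ⟨u, ⟨husb.trans hsb, ?_⟩, hune, husum⟩
      intro hbu
      exact hvs (husb (hbu hv))
    -- set up the basis
    set t : Set (Fin n → ZMod 2) := LinearIndepOn.extend (K := ZMod 2) (v := id) hli (Set.subset_univ _) with htdef
    have hst : (↑s : Set (Fin n → ZMod 2)) ⊆ t := LinearIndepOn.subset_extend (K := ZMod 2) (v := id) hli _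
    let B0 : Module.Basis ↥t (ZMod 2) (Fin n → ZMod 2) := Module.Basis.extend hli
    haveI : Fintype ↥t := (Set.toFinite t).fintype
    have hcardt : Fintype.card ↥t = n := by
      have h1 := Module.finrank_eq_card_basis B0
      rw [Module.finrank_fin_fun (ZMod 2)] at h1
      exact h1.symm
    have e0 : ↥(↑s : Set (Fin n → ZMod 2)) ≃ {x // x ∈ s} := Equiv.subtypeEquivRight (fun x => Finset.mem_coe)
    have hcard_s : Fintype.card ↥(↑s : Set (Fin n → ZMod 2)) = k - 1 := by
      rw [Fintype.card_congr e0, Fintype.card_coe, hscard]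
    let es : Fin (k - 1) ≃ ↥(↑s : Set (Fin n → ZMod 2)) := (Fintype.equivFinOfCardEq hcard_s).symm
    let f : Fin (k - 1) → ↥t := fun i => ⟨(es i : Fin n → ZMod 2), hst (es i).2⟩
    have hfinj : Function.Injective f := by
      intro i j h
      have h2 : (f i : Fin n → ZMod 2) = (f j : Fin n → ZMod 2) := congrArg Subtype.val h
      exact es.injective (Subtype.ext h2)
    obtain ⟨ψ, hψ⟩ := exists_equiv_extend hcardt f hfinj hmn
    let B : Module.Basis (Fin n) (ZMod 2) (Fin n → ZMod 2) := B0.reindex ψ.symm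
    have hB : ∀ j, B j = ↑(ψ j) := by
      intro j
      rw [Module.Basis.reindex_apply, Equiv.symm_symm]
      exact Module.Basis.extend_apply_self hli (ψ j)
    let g : (Fin n → ZMod 2) ≃ₗ[ZMod 2] (Fin n → ZMod 2) := (Pi.basisFun (ZMod 2) (Fin n)).equiv B (Equiv.refl _)
    refine ⟨g, ?_⟩
    have hgE : ∀ i : Fin (k - 1), g (Pi.single (Fin.castLE hmn i) 1) = ↑(es i) := by
      intro i
      have h1 : (Pi.single (Fin.castLE hmn i) 1 : Fin n → ZMod 2)
          = Pi.basisFun (ZMod 2) (Fin n) (Fin.castLE hmn i) := by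
        rw [Pi.basisFun_apply]
      rw [h1]
      show ((Pi.basisFun (ZMod 2) (Fin n)).equiv B (Equiv.refl _))
        (Pi.basisFun (ZMod 2) (Fin n) (Fin.castLE hmn i)) = _
      rw [Module.Basis.equiv_apply, Equiv.refl_apply, hB, hψ]
    rw [Finset.image_union]
    have hA : Finset.image (⇑g) (univ.image fun i : Fin (k - 1) =>
        (Pi.single (Fin.castLE hmn i) 1 : Fin n → ZMod 2)) = s := by
      rw [Finset.image_image]
      ext x
      simp only [mem_image, mem_univ, true_and, Function.comp]
      constructor
      · rintro ⟨i, rfl⟩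
        rw [hgE]
        exact (es i).2
      · intro hx
        exact ⟨es.symm ⟨x, hx⟩, by rw [hgE, Equiv.apply_symm_apply]⟩
    have hT : g (∑ i : Fin (k - 1), (Pi.single (Fin.castLE hmn i) 1 : Fin n → ZMod 2)) = v := by
      rw [map_sum]
      rw [Finset.sum_congr rfl (fun i _ => hgE i)]
      rw [← hsumv]
      calc ∑ i : Fin (k - 1), ((es i : Fin n → ZMod 2))
          = ∑ x : (↑s : Set (Fin n → ZMod 2)), (x : Fin n → ZMod 2) :=
            Fintype.sum_equiv es _ _ (fun i => rfl)
        _ = ∑ x ∈ s, x := Finset.sum_finset_coe (fun x => x) s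
    rw [Finset.image_singleton, hT, hA, hbis, Finset.insert_eq, union_comm]
  · -- in the orbit → irreducible
    rintro ⟨g, hg⟩ ⟨u, husub, hune, husum⟩
    set C : Finset (Fin n → ZMod 2) := (Finset.univ.image (fun i : Fin (k - 1) =>
        (Pi.single (Fin.castLE hmn i) 1 : Fin n → ZMod 2))) ∪
      {∑ i : Fin (k - 1), (Pi.single (Fin.castLE hmn i) 1 : Fin n → ZMod 2)} with hC
    have hgC : Finset.image (⇑g) C = b := hg
    set u0 : Finset (Fin n → ZMod 2) := C.filter (fun x => g x ∈ u) with hu0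
    have himg : Finset.image (⇑g) u0 = u := by
      ext y
      constructor
      · intro hy
        obtain ⟨x, hx, rfl⟩ := mem_image.1 hy
        exact (mem_filter.1 hx).2
      · intro hy
        have : y ∈ b := husub.1 hy
        rw [← hgC] at this
        obtain ⟨x, hx, rfl⟩ := mem_image.1 this
        exact mem_image.2 ⟨x, mem_filter.2 ⟨hx, hy⟩, rfl⟩
    have hsum0 : (∑ x ∈ u0, x) = 0 := by
      have h1 : (∑ y ∈ u, y) = g (∑ x ∈ u0, x) := by
        rw [← himg, Finset.sum_image (fun a _ b _ h => g.injective h), map_sum]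
      rw [husum] at h1
      have := h1.symm
      rwa [← map_zero g, g.injective.eq_iff] at this
    rcases ck_subset hmn hm2 u0 (filter_subset _ _) hsum0 with h | h
    · rw [h, image_empty] at himg
      exact hune.ne_empty himg.symm
    · rw [h] at himg
      rw [hgC] at himg
      exact husub.ne himg.symm
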